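/- Let T_1, T_2, ..., T_n be bounded linear operators on a complex Hilbert space H. Then ‖∑_{k=1}^n T_k‖² ≤ ‖∑_{k=1}^n T_k* T_k‖ + ω( (∑_{j=1}^n T_j*)(∑_{k=1}^n T_k) − ∑_{k=1}^n T_k* T_k ). -/

import Mathlib

open ContinuousLinearMap

/-- The numerical radius of a bounded linear operator on a complex Hilbert space:
`ω(T) = sup_{‖x‖ = 1} |⟨Tx, x⟩|`. -/
noncomputable def numRadius {H : Type*} [NormedAddCommGroup H] [InnerProductSpace ℂ H]
    (T : H →L[ℂ] H) : ℝ :=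
  ⨆ x : {x : H // ‖x‖ = 1}, ‖(inner ℂ (T x) (x : H) : ℂ)‖

lemma numRadius_bddAbove {H : Type*} [NormedAddCommGroup H] [InnerProductSpace ℂ H]
    (D : H →L[ℂ] H) :
    BddAbove (Set.range fun x : {x : H // ‖x‖ = 1} => ‖(inner ℂ (D x) (x : H) : ℂ)‖) := by
  refine ⟨‖D‖, ?_⟩
  rintro y ⟨⟨x, hx⟩, rfl⟩
  calc ‖(inner ℂ (D x) (x : H) : ℂ)‖ ≤ ‖D x‖ * ‖x‖ := norm_inner_le_norm _ _
    _ ≤ (‖D‖ * ‖x‖) * ‖x‖ := by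
        exact mul_le_mul_of_nonneg_right (D.le_opNorm x) (norm_nonneg x)
    _ = ‖D‖ := by rw [hx]; ring

lemma numRadius_nonneg {H : Type*} [NormedAddCommGroup H] [InnerProductSpace ℂ H]
    (D : H →L[ℂ] H) : 0 ≤ numRadius D :=
  Real.iSup_nonneg fun _ => norm_nonneg _

lemma norm_inner_le_numRadius {H : Type*} [NormedAddCommGroup H] [InnerProductSpace ℂ H]
    (D : H →L[ℂ] H) (x : H) (hx : ‖x‖ = 1) :
    ‖(inner ℂ (D x) x : ℂ)‖ ≤ numRadius D :=
  le_ciSup (numRadius_bddAbove D) (⟨x, hx⟩ : {x : H // ‖x‖ = 1})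

theorem norm_sq_sum_le_norm_add_numRadius
    {H : Type*} [NormedAddCommGroup H] [InnerProductSpace ℂ H] [CompleteSpace H]
    (n : ℕ) (T : Fin n → H →L[ℂ] H) :
    ‖∑ k, T k‖ ^ 2 ≤
      ‖∑ k, adjoint (T k) ∘L T k‖ +
        numRadius ((∑ j, adjoint (T j)) ∘L (∑ k, T k) - ∑ k, adjoint (T k) ∘L T k) := by
  set S : H →L[ℂ] H := ∑ k, T k with hS
  set A : H →L[ℂ] H := ∑ k, adjoint (T k) ∘L T k with hA
  set D : H →L[ℂ] H := (∑ j, adjoint (T j)) ∘L S - A with hD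
  have hadj : adjoint S = ∑ j, adjoint (T j) := by
    simp [hS, map_sum]
  have hRHS : (0:ℝ) ≤ ‖A‖ + numRadius D := add_nonneg (norm_nonneg _) (numRadius_nonneg D)
  -- key pointwise estimate for unit vectors
  have key : ∀ x : H, ‖x‖ = 1 → ‖S x‖ ^ 2 ≤ ‖A‖ + numRadius D := by
    intro x hx
    have hSS : (adjoint S ∘L S) = A + D := by
      rw [hD, hadj]; abel
    have h1 : (‖S x‖ : ℝ) ^ 2 = Complex.re (inner ℂ (S x) (S x) : ℂ) := by
      rw [← inner_self_eq_norm_sq (𝕜 := ℂ) (S x)]; rfl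
    have h2 : (inner ℂ (S x) (S x) : ℂ) = inner ℂ (A x) x + inner ℂ (D x) x := by
      have : (inner ℂ ((adjoint S ∘L S) x) x : ℂ) = inner ℂ (S x) (S x) := by
        rw [comp_apply, adjoint_inner_left]
      rw [← this, hSS]
      simp [inner_add_left]
    rw [h1, h2]
    have h3 : Complex.re ((inner ℂ (A x) x : ℂ) + inner ℂ (D x) x) ≤
        ‖(inner ℂ (A x) x : ℂ)‖ + ‖(inner ℂ (D x) x : ℂ)‖ := by
      calc Complex.re ((inner ℂ (A x) x : ℂ) + inner ℂ (D x) x)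
          ≤ ‖(inner ℂ (A x) x : ℂ) + inner ℂ (D x) x‖ := Complex.re_le_norm _
        _ ≤ _ := norm_add_le _ _
    refine h3.trans (add_le_add ?_ (norm_inner_le_numRadius D x hx))
    calc ‖(inner ℂ (A x) x : ℂ)‖ ≤ ‖A x‖ * ‖x‖ := norm_inner_le_norm _ _
      _ ≤ (‖A‖ * ‖x‖) * ‖x‖ := mul_le_mul_of_nonneg_right (A.le_opNorm x) (norm_nonneg x)
      _ = ‖A‖ := by rw [hx]; ring
  have hSle : ‖S‖ ≤ Real.sqrt (‖A‖ + numRadius D) := by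
    refine S.opNorm_le_bound (Real.sqrt_nonneg _) (fun x => ?_)
    rcases eq_or_ne x 0 with rfl | hx0
    · simp
    · have hnx : ‖x‖ ≠ 0 := norm_ne_zero_iff.mpr hx0
      set y : H := ‖x‖⁻¹ • x with hy
      have hy1 : ‖y‖ = 1 := by
        rw [hy, norm_smul, norm_inv, norm_norm, inv_mul_cancel₀ hnx]
      have hSy : ‖S y‖ ≤ Real.sqrt (‖A‖ + numRadius D) := by
        have := key y hy1
        have h0 : (0:ℝ) ≤ ‖S y‖ := norm_nonneg _
        nlinarith [Real.sq_sqrt hRHS, Real.sqrt_nonneg (‖A‖ + numRadius D)]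
      have hx' : x = ‖x‖ • y := by
        rw [hy, smul_smul, mul_inv_cancel₀ hnx, one_smul]
      calc ‖S x‖ = ‖x‖ * ‖S y‖ := by
            nth_rewrite 1 [hx']
            rw [map_smul_of_tower, norm_smul, norm_norm]
        _ ≤ ‖x‖ * Real.sqrt (‖A‖ + numRadius D) := by
            exact mul_le_mul_of_nonneg_left hSy (norm_nonneg x)
        _ = Real.sqrt (‖A‖ + numRadius D) * ‖x‖ := mul_comm _ _
  calc ‖S‖ ^ 2 ≤ Real.sqrt (‖A‖ + numRadius D) ^ 2 := by
        exact pow_le_pow_left₀ (norm_nonneg _) hSle 2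
    _ = ‖A‖ + numRadius D := Real.sq_sqrt hRHS
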